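/- For every n, the number of involutions of {1,...,n} avoiding both 4321 and 213 equals 1 + ⌊n/2⌋·⌈n/2⌉. -/

import Mathlib

def Av4321 {n : ℕ} (σ : Equiv.Perm (Fin n)) : Prop :=
  ¬ ∃ i j k l : Fin n, i < j ∧ j < k ∧ k < l ∧ σ l < σ k ∧ σ k < σ j ∧ σ j < σ i

def Av213 {n : ℕ} (σ : Equiv.Perm (Fin n)) : Prop :=
  ¬ ∃ i j k : Fin n, i < j ∧ j < k ∧ σ j < σ i ∧ σ i < σ k

namespace AuxAv

def g (n a b i : ℕ) : ℕ :=
  if a ≤ i ∧ i + b + 1 ≤ n + a then i + (b - a)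
  else if b ≤ i then i - (b - a)
  else i

lemma g_lt {n a b : ℕ} (ha : a < n) (hb : b < n) (hc : n + a ≤ 2 * b) {i : ℕ} (hi : i < n) :
    g n a b i < n := by unfold g; split_ifs <;> omega

lemma g_invol {n a b : ℕ} (ha : a < n) (hb : b < n) (hc : n + a ≤ 2 * b) {i : ℕ} (hi : i < n) :
    g n a b (g n a b i) = i := by unfold g; split_ifs <;> omega

lemma g213 {n a b : ℕ} (ha : a < n) (hb : b < n) (hc : n + a ≤ 2 * b) {i j k : ℕ}
    (hij : i < j) (hjk : j < k) (hk : k < n)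
    (h1 : g n a b j < g n a b i) (h2 : g n a b i < g n a b k) : False := by
  unfold g at h1 h2; split_ifs at h1 h2 <;> omega

lemma g4321 {n a b : ℕ} (ha : a < n) (hb : b < n) (hc : n + a ≤ 2 * b) {i j k l : ℕ}
    (hij : i < j) (hjk : j < k) (hkl : k < l) (hl : l < n)
    (h1 : g n a b l < g n a b k) (h2 : g n a b k < g n a b j) (h3 : g n a b j < g n a b i) :
    False := by
  unfold g at h1 h2 h3; split_ifs at h1 h2 h3 <;> omega

def mk {n : ℕ} (p : {q : Fin n × Fin n // n + q.1.val ≤ 2 * q.2.val}) : Equiv.Perm (Fin n) :=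
  Function.Involutive.toPerm
    (fun i => ⟨g n p.1.1.val p.1.2.val i.val, g_lt p.1.1.isLt p.1.2.isLt p.2 i.isLt⟩)
    (fun i => Fin.ext (g_invol p.1.1.isLt p.1.2.isLt p.2 i.isLt))

lemma mk_apply {n : ℕ} (p : {q : Fin n × Fin n // n + q.1.val ≤ 2 * q.2.val}) (i : Fin n) :
    (mk p i).val = g n p.1.1.val p.1.2.val i.val := rfl

lemma mk_invol {n : ℕ} (p : {q : Fin n × Fin n // n + q.1.val ≤ 2 * q.2.val}) :
    mk p * mk p = 1 := by
  refine Equiv.ext fun i => Fin.ext ?_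
  show g n p.1.1.val p.1.2.val (g n p.1.1.val p.1.2.val i.val) = i.val
  exact g_invol p.1.1.isLt p.1.2.isLt p.2 i.isLt

lemma mk_av213 {n : ℕ} (p : {q : Fin n × Fin n // n + q.1.val ≤ 2 * q.2.val}) :
    Av213 (mk p) := by
  rintro ⟨i, j, k, hij, hjk, h1, h2⟩
  exact g213 p.1.1.isLt p.1.2.isLt p.2 (Fin.lt_def.mp hij) (Fin.lt_def.mp hjk) k.isLt h1 h2

lemma mk_av4321 {n : ℕ} (p : {q : Fin n × Fin n // n + q.1.val ≤ 2 * q.2.val}) :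
    Av4321 (mk p) := by
  rintro ⟨i, j, k, l, hij, hjk, hkl, h1, h2, h3⟩
  exact g4321 p.1.1.isLt p.1.2.isLt p.2 (Fin.lt_def.mp hij) (Fin.lt_def.mp hjk)
    (Fin.lt_def.mp hkl) l.isLt h1 h2 h3

lemma mk_ne_one {n : ℕ} (p : {q : Fin n × Fin n // n + q.1.val ≤ 2 * q.2.val}) :
    mk p ≠ 1 := by
  intro h
  obtain ⟨⟨a, b⟩, hc⟩ := p
  have this : g n a.val b.val a.val = a.val := by
    have h2 : (mk ⟨(a, b), hc⟩ a).val = ((1 : Equiv.Perm (Fin n)) a).val := by rw [h]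
    exact h2
  have ha := a.isLt; have hb := b.isLt
  have hc' : n + a.val ≤ 2 * b.val := hc
  unfold g at this; split_ifs at this <;> omega

lemma mk_injective {n : ℕ} : Function.Injective (mk (n := n)) := by
  rintro ⟨⟨a, b⟩, hc⟩ ⟨⟨a', b'⟩, hc'⟩ h
  have key : ∀ (x y : Fin n) (hx : n + x.val ≤ 2 * y.val) (x' y' : Fin n)
      (hx' : n + x'.val ≤ 2 * y'.val), mk ⟨(x, y), hx⟩ = mk ⟨(x', y'), hx'⟩ →
      x'.val < x.val → False := by
    intro x y hx x' y' hx' heq hlt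
    have h1 : g n x.val y.val x'.val = g n x'.val y'.val x'.val := by
      have h2 : (mk ⟨(x, y), hx⟩ x').val = (mk ⟨(x', y'), hx'⟩ x').val := by rw [heq]
      exact h2
    have := x.isLt; have := y.isLt; have := x'.isLt; have := y'.isLt
    unfold g at h1; split_ifs at h1 <;> omega
  have hane : a.val = a'.val := by
    rcases lt_trichotomy a.val a'.val with h1 | h1 | h1
    · exact absurd h1 (fun h1 => key _ _ hc' _ _ hc h.symm h1)
    · exact h1
    · exact absurd h1 (fun h1 => key _ _ hc _ _ hc' h h1)
  have ha : a = a' := Fin.ext hane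
  subst ha
  have h1 : g n a.val b.val a.val = g n a.val b'.val a.val := by
    have h2 : (mk ⟨(a, b), hc⟩ a).val = (mk ⟨(a, b'), hc'⟩ a).val := by rw [h]
    exact h2
  have := a.isLt; have := b.isLt; have := b'.isLt
  have hcv : n + a.val ≤ 2 * b.val := hc
  have hcv' : n + a.val ≤ 2 * b'.val := hc'
  have hbv : b.val = b'.val := by
    unfold g at h1; split_ifs at h1 <;> omega
  exact Subtype.ext (Prod.ext rfl (Fin.ext hbv))



theorem classify {n : ℕ} (σ : Equiv.Perm (Fin n)) (hinv : σ * σ = 1)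
    (h43 : Av4321 σ) (h21 : Av213 σ) (hne : σ ≠ 1) :
    ∃ p : {q : Fin n × Fin n // n + q.1.val ≤ 2 * q.2.val}, σ = mk p := by
  have hinv' : ∀ x, σ (σ x) = x := fun x => by
    have := congrArg (fun τ : Equiv.Perm (Fin n) => τ x) hinv
    simpa using this
  -- the set of non-fixed points
  have hFne : (Finset.univ.filter (fun x : Fin n => σ x ≠ x)).Nonempty := by
    by_contra h
    rw [Finset.not_nonempty_iff_eq_empty, Finset.filter_eq_empty_iff] at h
    exact hne (Equiv.ext fun x => by simpa using h (Finset.mem_univ x))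
  set Fs := Finset.univ.filter (fun x : Fin n => σ x ≠ x) with hFs
  set a := Fs.min' hFne with ha
  set b := σ a with hb
  have haF : σ a ≠ a := by
    have : a ∈ Fs := Fs.min'_mem hFne
    simpa [hFs] using this
  have F0 : ∀ i : Fin n, i < a → σ i = i := by
    intro i hi
    by_contra h
    have : i ∈ Fs := by simp [hFs, h]
    exact absurd (Fs.min'_le i this) (not_le.mpr hi)
  have F1 : a < b := by
    rcases lt_trichotomy a b with h | h | h
    · exact h
    · exact absurd h.symm haF
    · exfalso
      have h1 : σ b = b := F0 b h
      have h2 : σ b = a := by rw [hb, hinv']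
      rw [h1] at h2; exact haF (hb ▸ h2)
  have hσb : σ b = a := by rw [hb, hinv']
  have F2 : ∀ k : Fin n, b < k → σ k < b := by
    intro k hk
    by_contra h
    push_neg at h
    rcases eq_or_lt_of_le h with h1 | h1
    · have : k = a := σ.injective (by rw [← h1, hb])
      rw [this] at hk
      exact absurd (F1.trans hk) (lt_irrefl a)
    · exact h21 ⟨a, b, k, F1, hk, by rw [hσb]; exact F1, hb ▸ h1⟩
  have F3 : ∀ i j : Fin n, i < j → b ≤ σ i → b ≤ σ j → σ i < σ j := by
    intro i j hij hbi hbj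
    by_contra h
    push_neg at h
    have hne2 : σ j ≠ σ i := fun h2 => (hij.ne (σ.injective h2).symm)
    have hji : σ j < σ i := lt_of_le_of_ne h hne2
    rcases eq_or_lt_of_le hbi with h1 | h1
    · exact absurd (h1 ▸ hji) (not_lt.mpr hbj)
    rcases eq_or_lt_of_le hbj with h2 | h2
    · have : j = a := σ.injective (by rw [← h2, hb])
      subst this
      have : σ i = i := F0 i hij
      rw [this] at h1
      exact absurd (hij.trans F1) (not_lt.mpr h1.le)
    have hjb : j < b := by
      rcases lt_trichotomy j b with h3 | h3 | h3
      · exact h3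
      · exact absurd hbj (by rw [h3, hσb]; exact not_le.mpr F1)
      · exact absurd h2 (not_lt.mpr (F2 j h3).le)
    exact h43 ⟨i, j, σ j, σ i, hij, lt_of_lt_of_le hjb hbj, hji,
      by rw [hinv', hinv']; exact ⟨hij, (hjb.trans_le hbj), hji⟩⟩
  have F4 : ∀ t (ht : b.val + t < n), σ ⟨a.val + t, by omega⟩ = ⟨b.val + t, ht⟩ := by
    intro t
    induction t with
    | zero =>
      intro ht
      have h1 : (⟨a.val + 0, by omega⟩ : Fin n) = a := Fin.ext (by simp)
      rw [h1, ← hb]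
      exact Fin.ext (by simp)
    | succ t ih =>
      intro ht
      have ht' : b.val + t < n := by omega
      have iht := ih ht'
      obtain ⟨m, hm0⟩ : ∃ m, m = σ ⟨b.val + t + 1, ht⟩ := ⟨_, rfl⟩
      have hm : σ m = ⟨b.val + t + 1, ht⟩ := by rw [hm0, hinv']
      have hmb : m.val < b.val := by
        rcases lt_trichotomy m.val b.val with h1 | h1 | h1
        · exact h1
        · exfalso
          have : m = b := Fin.ext h1
          rw [this, hσb] at hm
          have : a.val = b.val + t + 1 := congrArg Fin.val hm
          have := F1
          rw [Fin.lt_def] at this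
          omega
        · exfalso
          have := F2 m (by rw [Fin.lt_def]; omega)
          rw [hm] at this
          rw [Fin.lt_def] at this
          simp at this
          omega
      have ham : a.val ≤ m.val := by
        by_contra h1
        push_neg at h1
        have := F0 m (by rw [Fin.lt_def]; exact h1)
        rw [this] at hm
        have : m.val = b.val + t + 1 := congrArg Fin.val hm
        have := F1; rw [Fin.lt_def] at this
        omega
      have hatm : a.val + t < m.val := by
        rcases lt_trichotomy m.val (a.val + t) with h1 | h1 | h1
        · exfalso
          have h2 := F3 m ⟨a.val + t, by omega⟩ (by rw [Fin.lt_def]; exact h1)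
            (by rw [hm, Fin.le_def]; simp; omega) (by rw [iht, Fin.le_def]; simp)
          rw [hm, iht, Fin.lt_def] at h2
          simp at h2
        · exfalso
          have : m = ⟨a.val + t, by omega⟩ := Fin.ext h1
          rw [this, iht] at hm
          have : b.val + t = b.val + t + 1 := congrArg Fin.val hm
          omega
        · exact h1
      have hmeq : m.val = a.val + t + 1 := by
        by_contra h1
        have hgm : a.val + t + 1 < m.val := by omega
        set gg : Fin n := ⟨a.val + t + 1, by omega⟩ with hgg
        have hgb : (σ gg).val < b.val := by
          by_contra h2
          push_neg at h2
          have h3 := F3 ⟨a.val + t, by omega⟩ gg (by rw [Fin.lt_def]; show a.val + t < a.val + t + 1; omega)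
            (by rw [iht, Fin.le_def]; simp) (by rw [Fin.le_def]; exact h2)
          have h4 := F3 gg m (by rw [Fin.lt_def]; exact hgm)
            (by rw [Fin.le_def]; exact h2) (by rw [hm, Fin.le_def]; simp; omega)
          rw [iht, Fin.lt_def] at h3
          rw [hm, Fin.lt_def] at h4
          simp at h3 h4
          omega
        refine h21 ⟨a, gg, m, ?_, ?_, ?_, ?_⟩
        · rw [Fin.lt_def]; show a.val < a.val + t + 1; omega
        · rw [Fin.lt_def]; exact hgm
        · rw [← hb, Fin.lt_def]; exact hgb
        · rw [← hb, hm, Fin.lt_def]; simp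
      have : (⟨a.val + (t + 1), by omega⟩ : Fin n) = m := Fin.ext (by simp; omega)
      rw [this, hm]
      exact Fin.ext rfl
  have F5 : ∀ t (ht : b.val + t < n), σ ⟨b.val + t, ht⟩ = ⟨a.val + t, by omega⟩ := by
    intro t ht
    rw [← F4 t ht, hinv']
  have hn1 : 1 ≤ n := by have := a.isLt; omega
  have hbn : b.val ≤ n - 1 := by have := b.isLt; omega
  have F6 : n + a.val ≤ 2 * b.val := by
    have hab := F1; rw [Fin.lt_def] at hab
    have h1 := F4 (n - 1 - b.val) (by omega)
    have hPb : a.val + (n - 1 - b.val) < b.val := by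
      rcases lt_trichotomy (a.val + (n - 1 - b.val)) b.val with h2 | h2 | h2
      · exact h2
      · exfalso
        have h3 : (⟨a.val + (n - 1 - b.val), by omega⟩ : Fin n) = b := Fin.ext h2
        rw [h3, hσb] at h1
        have := congrArg Fin.val h1
        simp at this
        omega
      · exfalso
        have h4 := F2 ⟨a.val + (n - 1 - b.val), by omega⟩ (by rw [Fin.lt_def]; exact h2)
        rw [h1, Fin.lt_def] at h4
        simp at h4
    omega
  have hab := F1; rw [Fin.lt_def] at hab
  have F7 : ∀ i : Fin n, a.val + (n - 1 - b.val) < i.val → i.val < b.val → σ i = i := by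
    by_contra hcon
    push_neg at hcon
    obtain ⟨i0, hi0p, hi0b, hi0f⟩ := hcon
    have hEne : (Finset.univ.filter (fun x : Fin n =>
        a.val + (n - 1 - b.val) < x.val ∧ x.val < b.val ∧ σ x ≠ x)).Nonempty :=
      ⟨i0, by simp only [Finset.mem_filter, Finset.mem_univ, true_and]; exact ⟨hi0p, hi0b, hi0f⟩⟩
    obtain ⟨a', ha'eq⟩ : ∃ a', a' = (Finset.univ.filter (fun x : Fin n =>
        a.val + (n - 1 - b.val) < x.val ∧ x.val < b.val ∧ σ x ≠ x)).min' hEne := ⟨_, rfl⟩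
    have ha'mem := ha'eq ▸ Finset.min'_mem _ hEne
    rw [Finset.mem_filter] at ha'mem
    obtain ⟨-, ha'p, ha'b, ha'f⟩ := ha'mem
    have ha'min : ∀ x : Fin n, a.val + (n - 1 - b.val) < x.val → x.val < b.val → σ x ≠ x →
        a' ≤ x := by
      intro x h1 h2 h3
      rw [ha'eq]
      exact Finset.min'_le _ x (by simp only [Finset.mem_filter, Finset.mem_univ, true_and]; exact ⟨h1, h2, h3⟩)
    have hσa' : σ (σ a') = a' := hinv' a'
    have hb'b : (σ a').val < b.val := by
      by_contra h1
      push_neg at h1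
      obtain ⟨t, htv⟩ : ∃ t, (σ a').val = b.val + t := ⟨(σ a').val - b.val, by omega⟩
      have hlt : b.val + t < n := by have := (σ a').isLt; omega
      have h2 : σ a' = ⟨b.val + t, hlt⟩ := Fin.ext htv
      have hσa2 := hσa'
      rw [h2, F5 t hlt] at hσa2
      have h4 := congrArg Fin.val hσa2
      simp at h4
      omega
    have hb'p : a.val + (n - 1 - b.val) < (σ a').val := by
      by_contra h1
      push_neg at h1
      rcases lt_or_ge (σ a').val a.val with h2 | h2
      · have h3 := F0 (σ a') (by rw [Fin.lt_def]; exact h2)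
        rw [hσa'] at h3
        exact ha'f (by rw [← h3])
      · obtain ⟨t, htv⟩ : ∃ t, (σ a').val = a.val + t := ⟨(σ a').val - a.val, by omega⟩
        have hlt : b.val + t < n := by omega
        have h3 : σ a' = ⟨a.val + t, by omega⟩ := Fin.ext htv
        have hσa2 := hσa'
        rw [h3, F4 t hlt] at hσa2
        have h5 := congrArg Fin.val hσa2
        simp at h5
        omega
    have ha'b' : a'.val < (σ a').val := by
      rcases lt_trichotomy a'.val (σ a').val with h1 | h1 | h1
      · exact h1
      · exact absurd (Fin.ext h1.symm) ha'f
      · exfalso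
        have h2 : σ (σ a') ≠ σ a' := by rw [hσa']; exact fun h => ha'f h.symm
        have h3 := ha'min (σ a') hb'p hb'b h2
        rw [Fin.le_def] at h3
        omega
    exact h43 ⟨a, a', σ a', b, by rw [Fin.lt_def]; omega, by rw [Fin.lt_def]; exact ha'b',
      by rw [Fin.lt_def]; exact hb'b,
      by rw [hσb, hσa', ← hb]; exact ⟨by rw [Fin.lt_def]; omega, by rw [Fin.lt_def]; omega,
        by rw [Fin.lt_def]; omega⟩⟩
  refine ⟨⟨(a, b), F6⟩, Equiv.ext fun i => Fin.ext ?_⟩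
  show (σ i).val = g n a.val b.val i.val
  have hin := i.isLt
  unfold g
  split_ifs with h1 h2
  · obtain ⟨ha1, ha2⟩ := h1
    obtain ⟨t, htv⟩ : ∃ t, i.val = a.val + t := ⟨i.val - a.val, by omega⟩
    have ht : b.val + t < n := by omega
    have hieq : i = ⟨a.val + t, by omega⟩ := Fin.ext htv
    rw [hieq, F4 t ht]
    simp
    omega
  · obtain ⟨t, htv⟩ : ∃ t, i.val = b.val + t := ⟨i.val - b.val, by omega⟩
    have hieq : i = ⟨b.val + t, by omega⟩ := Fin.ext htv
    rw [hieq, F5 t (by omega)]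
    simp
    omega
  · rcases lt_or_ge i.val a.val with h3 | h3
    · rw [F0 i (by rw [Fin.lt_def]; exact h3)]
    · have h4 : a.val + (n - 1 - b.val) < i.val := by omega
      have h5 : i.val < b.val := by omega
      rw [F7 i h4 h5]


def Cps (n : ℕ) : Finset (ℕ × ℕ) :=
  (Finset.range n ×ˢ Finset.range n).filter (fun p => n + p.1 ≤ 2 * p.2)

lemma Cps_step (n : ℕ) : (Cps (n + 2)).card = (Cps n).card + (n + 1) := by
  have hsplit : Cps (n + 2) =
      ((Cps n).image (fun p => (p.1, p.2 + 1))) ∪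
        ((Finset.range (n + 1)).image (fun a => (a, n + 1))) := by
    ext ⟨x, y⟩
    simp only [Cps, Finset.mem_filter, Finset.mem_product, Finset.mem_union, Finset.mem_image,
      Finset.mem_range, Prod.mk.injEq, Prod.exists]
    constructor
    · rintro ⟨⟨hx, hy⟩, hc⟩
      by_cases hy1 : y = n + 1
      · right; exact ⟨x, by omega, rfl, hy1.symm⟩
      · left; exact ⟨x, y - 1, ⟨⟨by omega, by omega⟩, by omega⟩, rfl, by omega⟩
    · rintro (⟨u, v, ⟨⟨hu, hv⟩, hc⟩, hx, hy⟩ | ⟨u, hu, hx, hy⟩) <;>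
        exact ⟨⟨by omega, by omega⟩, by omega⟩
  have hinj1 : Function.Injective (fun p : ℕ × ℕ => (p.1, p.2 + 1)) := by
    rintro ⟨u, v⟩ ⟨u', v'⟩ h
    simp only [Prod.mk.injEq] at h ⊢
    omega
  have hinj2 : Function.Injective (fun a : ℕ => (a, n + 1)) := by
    intro u u' h
    simpa using h
  have hdisj : Disjoint ((Cps n).image (fun p => (p.1, p.2 + 1)))
      ((Finset.range (n + 1)).image (fun a => (a, n + 1))) := by
    rw [Finset.disjoint_left]
    rintro ⟨x, y⟩ hp hq
    simp only [Cps, Finset.mem_image, Finset.mem_filter, Finset.mem_product, Finset.mem_range,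
      Prod.mk.injEq, Prod.exists] at hp hq
    obtain ⟨u, v, ⟨⟨hu, hv⟩, hc⟩, hx, hy⟩ := hp
    obtain ⟨u', hu', hx', hy'⟩ := hq
    omega
  rw [hsplit, Finset.card_union_of_disjoint hdisj, Finset.card_image_of_injective _ hinj1,
    Finset.card_image_of_injective _ hinj2, Finset.card_range]

lemma Cps_card : ∀ n, (Cps n).card = n / 2 * ((n + 1) / 2)
  | 0 => by decide
  | 1 => by decide
  | (n + 2) => by
    rw [Cps_step, Cps_card n]
    obtain ⟨m, rfl | rfl⟩ := Nat.even_or_odd' n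
    · have e1 : 2 * m / 2 = m := by omega
      have e2 : (2 * m + 1) / 2 = m := by omega
      have e3 : (2 * m + 2) / 2 = m + 1 := by omega
      have e4 : (2 * m + 2 + 1) / 2 = m + 1 := by omega
      rw [e1, e2, e3, e4]
      ring
    · have e1 : (2 * m + 1) / 2 = m := by omega
      have e2 : (2 * m + 1 + 1) / 2 = m + 1 := by omega
      have e3 : (2 * m + 1 + 2) / 2 = m + 1 := by omega
      have e4 : (2 * m + 1 + 2 + 1) / 2 = m + 2 := by omega
      rw [e1, e2, e3, e4]
      ring

lemma params_card (n : ℕ) :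
    Nat.card {q : Fin n × Fin n // n + q.1.val ≤ 2 * q.2.val} = (Cps n).card := by
  rw [Nat.card_eq_fintype_card, Fintype.card_subtype]
  apply Finset.card_bij (fun q _ => (q.1.val, q.2.val))
  · intro q hq
    rw [Finset.mem_filter] at hq
    simp only [Cps, Finset.mem_filter, Finset.mem_product, Finset.mem_range]
    exact ⟨⟨q.1.isLt, q.2.isLt⟩, hq.2⟩
  · rintro ⟨q1, q2⟩ hq ⟨r1, r2⟩ hr h
    simp only [Prod.mk.injEq] at h ⊢
    exact ⟨Fin.ext h.1, Fin.ext h.2⟩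
  · rintro ⟨x, y⟩ hp
    simp only [Cps, Finset.mem_filter, Finset.mem_product, Finset.mem_range] at hp
    obtain ⟨⟨hx, hy⟩, hc⟩ := hp
    refine ⟨(⟨x, hx⟩, ⟨y, hy⟩), ?_, rfl⟩
    rw [Finset.mem_filter]
    exact ⟨Finset.mem_univ _, hc⟩

end AuxAv

theorem card_involutions_avoiding_4321_213 (n : ℕ) :
    Nat.card {τ : Equiv.Perm (Fin n) // τ * τ = 1 ∧ Av4321 τ ∧ Av213 τ} =
      1 + (n / 2) * ((n + 1) / 2) := by
  classical
  set S : Set (Equiv.Perm (Fin n)) := {τ | τ * τ = 1 ∧ Av4321 τ ∧ Av213 τ} with hS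
  have hset : S = insert 1 (Set.range (AuxAv.mk (n := n))) := by
    ext τ
    simp only [hS, Set.mem_setOf_eq, Set.mem_insert_iff, Set.mem_range]
    constructor
    · rintro ⟨h1, h2, h3⟩
      by_cases h : τ = 1
      · exact Or.inl h
      · exact Or.inr ((AuxAv.classify τ h1 h2 h3 h).imp fun p hp => hp.symm)
    · rintro (rfl | ⟨p, rfl⟩)
      · refine ⟨by simp, ?_, ?_⟩
        · rintro ⟨i, j, k, l, h1, h2, h3, h4, h5, h6⟩
          simp only [Equiv.Perm.one_apply] at h4 h5 h6
          exact absurd h4 (lt_asymm h3)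
        · rintro ⟨i, j, k, h1, h2, h3, h4⟩
          simp only [Equiv.Perm.one_apply] at h3 h4
          exact absurd h3 (lt_asymm h1)
      · exact ⟨AuxAv.mk_invol p, AuxAv.mk_av4321 p, AuxAv.mk_av213 p⟩
  have h0 : Nat.card {τ : Equiv.Perm (Fin n) // τ * τ = 1 ∧ Av4321 τ ∧ Av213 τ}
      = S.ncard := Nat.card_coe_set_eq S
  rw [h0, hset]
  have hnot : (1 : Equiv.Perm (Fin n)) ∉ Set.range (AuxAv.mk (n := n)) := by
    rintro ⟨p, hp⟩
    exact AuxAv.mk_ne_one p hp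
  rw [Set.ncard_insert_of_notMem hnot (Set.toFinite _)]
  have h2 : (Set.range (AuxAv.mk (n := n))).ncard
      = Nat.card {q : Fin n × Fin n // n + q.1.val ≤ 2 * q.2.val} := by
    rw [← Nat.card_coe_set_eq]
    exact Nat.card_range_of_injective AuxAv.mk_injective
  rw [h2, AuxAv.params_card, AuxAv.Cps_card]
  omega
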